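/- arXiv:2510.16527 — 2 statements merged into one kernel-verified Lean document; each statement's English description precedes it below -/
import Mathlib

section
/- Let k ≥ 2 and n₁,…,n_k ≥ 2 be integers, n = n₁+⋯+n_k, fix i ∈ {1,…,k}, and let p ≠ 0 with p < nᵢ, μ ∈ ℝ and σ > 0. Let X and T be independent with X ~ Exp(μ, σ/nᵢ) and T ~ Gamma(n−k, σ). Then the function β ↦ Linex risk at (μ, σ) of X + β·T is finite on {β ∈ ℝ : p·β < 1} and attains a strict global minimum there at β₀ᵢ = (1/p)·(1 − (nᵢ/(nᵢ−p))^{1/(n−k+1)}). Thus X + β₀ᵢ·T is the best affine equivariant estimator of μ under Linex loss in the common-unknown-scale model. -/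
open MeasureTheory ProbabilityTheory Real
open scoped ENNReal

/-- Two-parameter exponential distribution `Exp(μ, θ)` with location `μ` and scale `θ`. -/
noncomputable def expLocMeasure (μ θ : ℝ) : Measure ℝ :=
  volume.withDensity fun x =>
    ENNReal.ofReal (if μ < x then θ⁻¹ * Real.exp (-(x - μ) / θ) else 0)

/-- Gamma distribution `Gamma(a, θ)` with shape `a` and scale `θ`. -/
noncomputable def gammaScaleMeasure (a θ : ℝ) : Measure ℝ :=
  volume.withDensity fun x =>
    ENNReal.ofReal (if 0 < x then x ^ (a - 1) * Real.exp (-x / θ) / (Real.Gamma a * θ ^ a) else 0)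

/-- The Linex loss `e^{pt} - pt - 1`. -/
noncomputable def linexLoss (p t : ℝ) : ℝ := Real.exp (p * t) - p * t - 1

/-- The Linex risk of an estimator `δ` of a location parameter `μ` at scale `σ`,
with values in `[0, ∞]`. -/
noncomputable def linexRisk {Ω : Type*} [MeasurableSpace Ω] (P : Measure Ω)
    (p μ σ : ℝ) (δ : Ω → ℝ) : ℝ≥0∞ :=
  ∫⁻ ω, ENNReal.ofReal (linexLoss p ((δ ω - μ) / σ)) ∂P

open Set

/-- Strict polynomial inequality behind uniqueness of the minimizer. -/
lemma aux_key_ineq {m : ℕ} (hm : 1 ≤ m) {t : ℝ} (ht : 0 < t) (hne : t ≠ 1) :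
    ((m : ℝ) + 1) * t ^ m < (m : ℝ) * t ^ (m + 1) + 1 := by
  have hfac : (m : ℝ) * t ^ (m + 1) + 1 - ((m : ℝ) + 1) * t ^ m
      = (t - 1) * ∑ j ∈ Finset.range m, (t ^ m - t ^ j) := by
    have hg : (∑ j ∈ Finset.range m, t ^ j) * (t - 1) = t ^ m - 1 := geom_sum_mul t m
    rw [Finset.sum_sub_distrib, Finset.sum_const, Finset.card_range, nsmul_eq_mul, pow_succ]
    linear_combination hg
  rcases lt_or_gt_of_ne hne with h1 | h1
  · have hsum : ∑ j ∈ Finset.range m, (t ^ m - t ^ j) < 0 := by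
      apply Finset.sum_neg (fun j hj => ?_) (Finset.nonempty_range_iff.mpr (by omega))
      have : t ^ m < t ^ j :=
        pow_lt_pow_right_of_lt_one₀ ht h1 (Finset.mem_range.mp hj)
      linarith
    nlinarith [mul_pos_of_neg_of_neg (by linarith : t - 1 < 0) hsum]
  · have hsum : 0 < ∑ j ∈ Finset.range m, (t ^ m - t ^ j) := by
      apply Finset.sum_pos (fun j hj => ?_) (Finset.nonempty_range_iff.mpr (by omega))
      have : t ^ j < t ^ m := pow_lt_pow_right₀ h1 (Finset.mem_range.mp hj)
      linarith
    nlinarith [mul_pos (by linarith : 0 < t - 1) hsum]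

/-- Strict minimization of `u ↦ c·u^(-m) + m·u` at `u = c^(1/(m+1))`. -/
lemma aux_min {m : ℕ} (hm : 1 ≤ m) {c u : ℝ} (hc : 0 < c) (hu : 0 < u)
    (hne : u ≠ c ^ ((1:ℝ)/((m:ℝ)+1))) :
    c * (c ^ ((1:ℝ)/((m:ℝ)+1))) ^ (-(m:ℝ)) + (m:ℝ) * c ^ ((1:ℝ)/((m:ℝ)+1))
      < c * u ^ (-(m:ℝ)) + (m:ℝ) * u := by
  set w : ℝ := c ^ ((1:ℝ)/((m:ℝ)+1)) with hwdef
  have hw : 0 < w := Real.rpow_pos_of_pos hc _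
  have hm1 : ((m:ℝ) + 1) ≠ 0 := by positivity
  have hcw : c = w ^ (m + 1) := by
    rw [hwdef, ← Real.rpow_natCast (c ^ ((1:ℝ)/((m:ℝ)+1))) (m+1), ← Real.rpow_mul hc.le]
    push_cast
    rw [one_div_mul_cancel hm1, Real.rpow_one]
  set t : ℝ := u / w with htdef
  have ht : 0 < t := div_pos hu hw
  have htne : t ≠ 1 := by
    intro h
    exact hne (by rw [htdef, div_eq_one_iff_eq hw.ne'] at h; exact h)
  have hu' : u = t * w := by rw [htdef, div_mul_cancel₀ _ hw.ne']
  have hq : (0:ℝ) < t ^ m := pow_pos ht m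
  have key : ((m:ℝ)+1) * t^m < 1 + (m:ℝ)*t*t^m := by
    have := aux_key_ineq hm ht htne
    rw [pow_succ] at this
    linarith
  have h2 : (m:ℝ) + 1 < 1/t^m + (m:ℝ)*t := by
    rw [← sub_pos]
    have e : 1/t^m + (m:ℝ)*t - ((m:ℝ)+1) = (1 + (m:ℝ)*t*t^m - ((m:ℝ)+1)*t^m)/t^m := by
      field_simp
    rw [e]
    exact div_pos (by linarith) hq
  have rp : ∀ x : ℝ, 0 < x → x ^ (-(m:ℝ)) = (x ^ m)⁻¹ := fun x hx => by
    rw [Real.rpow_neg hx.le, Real.rpow_natCast]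
  rw [rp u hu, rp w hw]
  have e1 : w^(m+1) * (w^m)⁻¹ = w := by field_simp [pow_succ]; ring
  have e2 : w^(m+1) * ((t*w)^m)⁻¹ = w * (1/t^m) := by
    rw [mul_pow, pow_succ]
    field_simp
  rw [hcw, hu', e1, e2]
  nlinarith [mul_lt_mul_of_pos_left h2 hw]

lemma aux_integral_withDensity {g : ℝ → ℝ} (hg : Measurable g) (hg0 : ∀ x, 0 ≤ g x)
    (φ : ℝ → ℝ) :
    ∫ x, φ x ∂(volume.withDensity fun x => ENNReal.ofReal (g x))
      = ∫ x, φ x * g x := by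
  have h1 : (fun x => ENNReal.ofReal (g x)) = fun x => ((g x).toNNReal : ℝ≥0∞) := rfl
  rw [h1, integral_withDensity_eq_integral_smul hg.real_toNNReal]
  congr 1
  ext x
  rw [NNReal.smul_def, Real.coe_toNNReal _ (hg0 x), smul_eq_mul, mul_comm]

lemma aux_integrable_withDensity {g : ℝ → ℝ} (hg : Measurable g) (hg0 : ∀ x, 0 ≤ g x)
    {φ : ℝ → ℝ} :
    Integrable φ (volume.withDensity fun x => ENNReal.ofReal (g x))
      ↔ Integrable (fun x => φ x * g x) volume := by
  rw [integrable_withDensity_iff (by measurability) (Filter.Eventually.of_forall fun x => ENNReal.ofReal_lt_top)]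
  refine integrable_congr (Filter.Eventually.of_forall fun x => ?_)
  simp only [ENNReal.toReal_ofReal (hg0 x)]

lemma aux_ite_indicator (μ : ℝ) (φ h : ℝ → ℝ) :
    (fun x => φ x * (if μ < x then h x else 0))
      = (Ioi μ).indicator (fun x => φ x * h x) := by
  ext x
  by_cases hx : μ < x <;> simp [Set.indicator, Set.mem_Ioi, hx]

lemma aux_shift_indicator (μ : ℝ) (ψ : ℝ → ℝ) :
    (Ioi μ).indicator (fun x => ψ (x - μ)) = fun x => (Ioi (0:ℝ)).indicator ψ (x - μ) := by
  ext x
  by_cases hx : μ < x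
  · simp [Set.indicator, Set.mem_Ioi, hx, sub_pos.mpr hx]
  · simp [Set.indicator, Set.mem_Ioi, hx, sub_pos, not_lt.mp hx]

lemma aux_integral_shift (μ : ℝ) (ψ : ℝ → ℝ) :
    ∫ x in Ioi μ, ψ (x - μ) = ∫ x in Ioi (0:ℝ), ψ x := by
  rw [← integral_indicator measurableSet_Ioi, ← integral_indicator measurableSet_Ioi,
    aux_shift_indicator, integral_sub_right_eq_self ((Ioi (0:ℝ)).indicator ψ) μ]

lemma aux_integrableOn_shift (μ : ℝ) {ψ : ℝ → ℝ} (hψ : IntegrableOn ψ (Ioi (0:ℝ))) :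
    IntegrableOn (fun x => ψ (x - μ)) (Ioi μ) := by
  rw [← integrable_indicator_iff measurableSet_Ioi, aux_shift_indicator]
  exact ((integrable_indicator_iff measurableSet_Ioi).mpr hψ).comp_sub_right μ

/-- Integrability of the standard gamma-type integrand. -/
lemma aux_gamma_integrableOn {s r : ℝ} (hs : 0 < s) (hr : 0 < r) :
    IntegrableOn (fun x : ℝ => x ^ (s - 1) * Real.exp (-(r * x))) (Ioi (0:ℝ)) := by
  have h := Real.GammaIntegral_convergent hs
  have h2 : IntegrableOn (fun x : ℝ => Real.exp (-(r * x)) * (r * x) ^ (s - 1)) (Ioi (0:ℝ)) := by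
    have := (integrableOn_Ioi_comp_mul_left_iff
      (fun x : ℝ => Real.exp (-x) * x ^ (s - 1)) 0 hr).mpr (by simpa using h)
    simpa using this
  have h3 := h2.const_mul ((r : ℝ) ^ (s - 1))⁻¹
  refine (integrableOn_congr_fun (fun x hx => ?_) measurableSet_Ioi).mpr h3
  have hx0 : (0:ℝ) < x := hx
  rw [Real.mul_rpow hr.le hx0.le]
  have hrs : (r:ℝ) ^ (s-1) ≠ 0 := by positivity
  field_simp

lemma aux_exp_dens_meas (μ θ : ℝ) :
    Measurable (fun x => if μ < x then θ⁻¹ * Real.exp (-(x - μ) / θ) else 0) := by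
  apply Measurable.ite (measurableSet_lt measurable_const measurable_id)
  · fun_prop
  · exact measurable_const

lemma aux_exp_dens_nonneg (μ θ : ℝ) (hθ : 0 < θ) (x : ℝ) :
    0 ≤ if μ < x then θ⁻¹ * Real.exp (-(x - μ) / θ) else 0 := by
  by_cases h : μ < x <;> simp [h]
  positivity

lemma aux_exp_marg (μ θ c : ℝ) (hθ : 0 < θ) (hc : c < θ⁻¹) :
    Integrable (fun x => Real.exp (c * (x - μ))) (expLocMeasure μ θ) ∧
    ∫ x, Real.exp (c * (x - μ)) ∂(expLocMeasure μ θ) = 1 / (1 - c * θ) := by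
  have hr : (0:ℝ) < θ⁻¹ - c := by linarith
  set ψ : ℝ → ℝ := fun y => θ⁻¹ * Real.exp (-((θ⁻¹ - c) * y)) with hψdef
  have hprod : (fun x => Real.exp (c * (x - μ)) *
      (if μ < x then θ⁻¹ * Real.exp (-(x - μ) / θ) else 0))
      = (Ioi μ).indicator fun x => ψ (x - μ) := by
    rw [aux_ite_indicator]
    apply Set.indicator_congr
    intro x hx
    show Real.exp (c * (x - μ)) * (θ⁻¹ * Real.exp (-(x - μ) / θ))
      = θ⁻¹ * Real.exp (-((θ⁻¹ - c) * (x - μ)))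
    have hθ' : θ ≠ 0 := ne_of_gt hθ
    have he : -((θ⁻¹ - c) * (x - μ)) = c * (x - μ) + -(x - μ) / θ := by
      field_simp
      ring
    rw [he, Real.exp_add]
    ring
  have hψint : IntegrableOn ψ (Ioi (0:ℝ)) := by
    have h0 := aux_gamma_integrableOn one_pos hr
    have he : (fun x : ℝ => x ^ ((1:ℝ) - 1) * Real.exp (-((θ⁻¹ - c) * x)))
        = fun x : ℝ => Real.exp (-((θ⁻¹ - c) * x)) := by
      ext x; rw [sub_self, Real.rpow_zero, one_mul]
    rw [he] at h0
    exact h0.const_mul θ⁻¹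
  have hψval : ∫ y in Ioi (0:ℝ), ψ y = 1 / (1 - c * θ) := by
    rw [hψdef]
    rw [integral_const_mul]
    have h0 := Real.integral_rpow_mul_exp_neg_mul_Ioi one_pos hr
    have he : (fun x : ℝ => x ^ ((1:ℝ) - 1) * Real.exp (-((θ⁻¹ - c) * x)))
        = fun x : ℝ => Real.exp (-((θ⁻¹ - c) * x)) := by
      ext x; rw [sub_self, Real.rpow_zero, one_mul]
    rw [he] at h0
    rw [h0, Real.rpow_one, Real.Gamma_one]
    have hθ' : θ ≠ 0 := ne_of_gt hθ
    rw [mul_one, one_div, one_div, ← mul_inv]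
    congr 1
    field_simp
  constructor
  · rw [expLocMeasure, aux_integrable_withDensity (aux_exp_dens_meas μ θ)
      (aux_exp_dens_nonneg μ θ hθ), hprod, integrable_indicator_iff measurableSet_Ioi]
    exact aux_integrableOn_shift μ hψint
  · rw [expLocMeasure, aux_integral_withDensity (aux_exp_dens_meas μ θ)
      (aux_exp_dens_nonneg μ θ hθ), hprod, integral_indicator measurableSet_Ioi,
      aux_integral_shift μ ψ, hψval]

lemma aux_exp_marg_mean (μ θ : ℝ) (hθ : 0 < θ) :
    Integrable (fun x => x - μ) (expLocMeasure μ θ) ∧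
    ∫ x, (x - μ) ∂(expLocMeasure μ θ) = θ := by
  set ψ : ℝ → ℝ := fun y => θ⁻¹ * (y ^ ((2:ℝ) - 1) * Real.exp (-(θ⁻¹ * y))) with hψdef
  have hprod : (fun x => (x - μ) *
      (if μ < x then θ⁻¹ * Real.exp (-(x - μ) / θ) else 0))
      = (Ioi μ).indicator fun x => ψ (x - μ) := by
    rw [aux_ite_indicator]
    apply Set.indicator_congr
    intro x hx
    have hx0 : (0:ℝ) < x - μ := sub_pos.mpr hx
    show (x - μ) * (θ⁻¹ * Real.exp (-(x - μ) / θ))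
      = θ⁻¹ * ((x - μ) ^ ((2:ℝ) - 1) * Real.exp (-(θ⁻¹ * (x - μ))))
    rw [show ((2:ℝ) - 1) = (1:ℝ) by norm_num, Real.rpow_one]
    rw [div_eq_mul_inv, neg_mul, mul_comm θ⁻¹ (x - μ)]
    ring
  have hψint : IntegrableOn ψ (Ioi (0:ℝ)) :=
    (aux_gamma_integrableOn two_pos (by positivity)).const_mul θ⁻¹
  have hψval : ∫ y in Ioi (0:ℝ), ψ y = θ := by
    rw [hψdef, integral_const_mul,
      Real.integral_rpow_mul_exp_neg_mul_Ioi two_pos (by positivity : (0:ℝ) < θ⁻¹),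
      Real.Gamma_two]
    rw [one_div, inv_inv, show (2:ℝ) = ((2:ℕ):ℝ) by norm_num, Real.rpow_natCast]
    have hθ' : θ ≠ 0 := ne_of_gt hθ
    field_simp
  constructor
  · rw [expLocMeasure, aux_integrable_withDensity (aux_exp_dens_meas μ θ)
      (aux_exp_dens_nonneg μ θ hθ), hprod, integrable_indicator_iff measurableSet_Ioi]
    exact aux_integrableOn_shift μ hψint
  · rw [expLocMeasure, aux_integral_withDensity (aux_exp_dens_meas μ θ)
      (aux_exp_dens_nonneg μ θ hθ), hprod, integral_indicator measurableSet_Ioi,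
      aux_integral_shift μ ψ, hψval]

lemma aux_gamma_dens_meas (a θ : ℝ) :
    Measurable (fun x : ℝ => if 0 < x then x ^ (a - 1) * Real.exp (-x / θ) / (Real.Gamma a * θ ^ a) else 0) := by
  apply Measurable.ite (measurableSet_lt measurable_const measurable_id)
  · fun_prop
  · exact measurable_const

lemma aux_gamma_dens_nonneg (a θ : ℝ) (x : ℝ) (ha : 0 < a) (hθ : 0 < θ) :
    0 ≤ if 0 < x then x ^ (a - 1) * Real.exp (-x / θ) / (Real.Gamma a * θ ^ a) else 0 := by
  by_cases h : 0 < x <;> simp [h]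
  have h1 : (0:ℝ) ≤ x ^ (a - 1) := Real.rpow_nonneg h.le _
  have h2 : (0:ℝ) < Real.Gamma a := Real.Gamma_pos_of_pos ha
  have h3 : (0:ℝ) < θ ^ a := Real.rpow_pos_of_pos hθ a
  positivity

lemma aux_gamma_marg (a θ c : ℝ) (ha : 0 < a) (hθ : 0 < θ) (hc : c < θ⁻¹) :
    Integrable (fun x => Real.exp (c * x)) (gammaScaleMeasure a θ) ∧
    ∫ x, Real.exp (c * x) ∂(gammaScaleMeasure a θ) = (1 - c * θ) ^ (-a) := by
  have hr : (0:ℝ) < θ⁻¹ - c := by linarith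
  have hθ' : θ ≠ 0 := ne_of_gt hθ
  have hΓ : (0:ℝ) < Real.Gamma a := Real.Gamma_pos_of_pos ha
  have hθa : (0:ℝ) < θ ^ a := Real.rpow_pos_of_pos hθ a
  set C : ℝ := (Real.Gamma a * θ ^ a)⁻¹ with hCdef
  set ψ : ℝ → ℝ := fun x => C * (x ^ (a - 1) * Real.exp (-((θ⁻¹ - c) * x))) with hψdef
  have hprod : (fun x => Real.exp (c * x) *
      (if 0 < x then x ^ (a - 1) * Real.exp (-x / θ) / (Real.Gamma a * θ ^ a) else 0))
      = (Ioi (0:ℝ)).indicator ψ := by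
    rw [aux_ite_indicator]
    apply Set.indicator_congr
    intro x hx
    show Real.exp (c * x) * (x ^ (a - 1) * Real.exp (-x / θ) / (Real.Gamma a * θ ^ a))
      = C * (x ^ (a - 1) * Real.exp (-((θ⁻¹ - c) * x)))
    have he : -((θ⁻¹ - c) * x) = c * x + -x / θ := by field_simp; ring
    rw [he, Real.exp_add, hCdef]
    field_simp
  have hψint : IntegrableOn ψ (Ioi (0:ℝ)) := (aux_gamma_integrableOn ha hr).const_mul C
  have hψval : ∫ x in Ioi (0:ℝ), ψ x = (1 - c * θ) ^ (-a) := by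
    rw [hψdef, integral_const_mul, Real.integral_rpow_mul_exp_neg_mul_Ioi ha hr]
    have e1 : (1:ℝ) - c * θ = (θ⁻¹ - c) * θ := by field_simp
    have e2 : (0:ℝ) < 1 - c * θ := by rw [e1]; positivity
    rw [e1, Real.rpow_neg (by positivity), Real.mul_rpow hr.le hθ.le, hCdef,
      one_div, Real.inv_rpow hr.le]
    have hra : (0:ℝ) < (θ⁻¹ - c) ^ a := Real.rpow_pos_of_pos hr a
    field_simp
  constructor
  · rw [gammaScaleMeasure, aux_integrable_withDensity (aux_gamma_dens_meas a θ)
      (fun x => aux_gamma_dens_nonneg a θ x ha hθ), hprod,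
      integrable_indicator_iff measurableSet_Ioi]
    exact hψint
  · rw [gammaScaleMeasure, aux_integral_withDensity (aux_gamma_dens_meas a θ)
      (fun x => aux_gamma_dens_nonneg a θ x ha hθ), hprod,
      integral_indicator measurableSet_Ioi, hψval]

lemma aux_gamma_marg_mean (a θ : ℝ) (ha : 0 < a) (hθ : 0 < θ) :
    Integrable (fun x => x) (gammaScaleMeasure a θ) ∧
    ∫ x, x ∂(gammaScaleMeasure a θ) = a * θ := by
  have hθ' : θ ≠ 0 := ne_of_gt hθ
  have hΓ : (0:ℝ) < Real.Gamma a := Real.Gamma_pos_of_pos ha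
  have hθa : (0:ℝ) < θ ^ a := Real.rpow_pos_of_pos hθ a
  have hθi : (0:ℝ) < θ⁻¹ := by positivity
  set C : ℝ := (Real.Gamma a * θ ^ a)⁻¹ with hCdef
  set ψ : ℝ → ℝ := fun x => C * (x ^ (a + 1 - 1) * Real.exp (-(θ⁻¹ * x))) with hψdef
  have hprod : (fun x => x *
      (if 0 < x then x ^ (a - 1) * Real.exp (-x / θ) / (Real.Gamma a * θ ^ a) else 0))
      = (Ioi (0:ℝ)).indicator ψ := by
    rw [aux_ite_indicator]
    apply Set.indicator_congr
    intro x hx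
    have hx0 : (0:ℝ) < x := hx
    show x * (x ^ (a - 1) * Real.exp (-x / θ) / (Real.Gamma a * θ ^ a))
      = C * (x ^ (a + 1 - 1) * Real.exp (-(θ⁻¹ * x)))
    have he : x ^ (a + 1 - 1) = x ^ (a - 1) * x := by
      rw [show a + 1 - 1 = (a - 1) + 1 by ring, Real.rpow_add_one (ne_of_gt hx0)]
    have he2 : -(θ⁻¹ * x) = -x / θ := by field_simp
    rw [he, he2, hCdef]
    field_simp
  have hψint : IntegrableOn ψ (Ioi (0:ℝ)) :=
    (aux_gamma_integrableOn (by linarith) hθi).const_mul C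
  have hψval : ∫ x in Ioi (0:ℝ), ψ x = a * θ := by
    rw [hψdef, integral_const_mul,
      Real.integral_rpow_mul_exp_neg_mul_Ioi (by linarith) hθi,
      Real.Gamma_add_one (ne_of_gt ha), one_div, inv_inv,
      Real.rpow_add_one hθ', hCdef]
    field_simp
  constructor
  · rw [gammaScaleMeasure, aux_integrable_withDensity (aux_gamma_dens_meas a θ)
      (fun x => aux_gamma_dens_nonneg a θ x ha hθ), hprod,
      integrable_indicator_iff measurableSet_Ioi]
    exact hψint
  · rw [gammaScaleMeasure, aux_integral_withDensity (aux_gamma_dens_meas a θ)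
      (fun x => aux_gamma_dens_nonneg a θ x ha hθ), hprod,
      integral_indicator measurableSet_Ioi, hψval]

lemma aux_loss_nonneg (p t : ℝ) : 0 ≤ linexLoss p t := by
  have := Real.add_one_le_exp (p * t)
  simp only [linexLoss]
  linarith

lemma aux_risk_eq {Ω : Type*} [MeasurableSpace Ω] (P : Measure Ω) [IsProbabilityMeasure P]
    {p σ μ ν a : ℝ} (β : ℝ) (hν : 0 < ν) (hpν : p < ν) (hσ : 0 < σ) (ha : 0 < a)
    (hβ : p * β < 1)
    {X T : Ω → ℝ} (hX : Measurable X) (hT : Measurable T) (hindep : IndepFun X T P)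
    (hXlaw : Measure.map X P = expLocMeasure μ (σ / ν))
    (hTlaw : Measure.map T P = gammaScaleMeasure a σ) :
    Integrable (fun ω => linexLoss p ((X ω + β * T ω - μ) / σ)) P ∧
    ∫ ω, linexLoss p ((X ω + β * T ω - μ) / σ) ∂P
      = ν / (ν - p) * (1 - p * β) ^ (-a) + a * (1 - p * β) - a - p / ν - 1 := by
  have hσ' : σ ≠ 0 := ne_of_gt hσ
  have hν' : ν ≠ 0 := ne_of_gt hν
  have hνp : (0:ℝ) < ν - p := by linarith
  have hθ : (0:ℝ) < σ / ν := by positivity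
  have hc1 : p / σ < (σ / ν)⁻¹ := by
    rw [inv_div, div_lt_div_iff₀ hσ hσ]
    nlinarith
  have hc2 : p * β / σ < σ⁻¹ := by
    rw [div_lt_iff₀ hσ, inv_mul_cancel₀ hσ']
    exact hβ
  -- marginal facts
  have E1 := aux_exp_marg μ (σ / ν) (p / σ) hθ hc1
  have E2 := aux_exp_marg_mean μ (σ / ν) hθ
  have G1 := aux_gamma_marg a σ (p * β / σ) ha hσ hc2
  have G2 := aux_gamma_marg_mean a σ ha hσ
  rw [← hXlaw] at E1 E2
  rw [← hTlaw] at G1 G2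
  -- transfer to P
  have hφ1 : Measurable fun x : ℝ => Real.exp (p / σ * (x - μ)) := by fun_prop
  have hφ2 : Measurable fun x : ℝ => Real.exp (p * β / σ * x) := by fun_prop
  have hφ3 : Measurable fun x : ℝ => x - μ := by fun_prop
  have intA : Integrable (fun ω => Real.exp (p / σ * (X ω - μ))) P :=
    (integrable_map_measure hφ1.aestronglyMeasurable hX.aemeasurable).mp E1.1
  have valA : ∫ ω, Real.exp (p / σ * (X ω - μ)) ∂P = ν / (ν - p) := by
    rw [← integral_map hX.aemeasurable hφ1.aestronglyMeasurable, E1.2]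
    have : p / σ * (σ / ν) = p / ν := by field_simp
    rw [this]
    rw [show (1:ℝ) - p / ν = (ν - p) / ν by field_simp, one_div_div]
  have intB : Integrable (fun ω => Real.exp (p * β / σ * T ω)) P :=
    (integrable_map_measure hφ2.aestronglyMeasurable hT.aemeasurable).mp G1.1
  have valB : ∫ ω, Real.exp (p * β / σ * T ω) ∂P = (1 - p * β) ^ (-a) := by
    rw [← integral_map hT.aemeasurable hφ2.aestronglyMeasurable, G1.2,
      div_mul_cancel₀ _ hσ']
  have intX' : Integrable (fun ω => X ω - μ) P :=
    (integrable_map_measure hφ3.aestronglyMeasurable hX.aemeasurable).mp E2.1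
  have valX' : ∫ ω, (X ω - μ) ∂P = σ / ν := by
    rw [← integral_map hX.aemeasurable hφ3.aestronglyMeasurable, E2.2]
  have intT : Integrable T P := by
    have := (integrable_map_measure measurable_id.aestronglyMeasurable hT.aemeasurable).mp G2.1
    exact this
  have valT : ∫ ω, T ω ∂P = a * σ := by
    have h := integral_map (μ := P) (φ := T) hT.aemeasurable
      (measurable_id.aestronglyMeasurable (μ := Measure.map T P))
    simp only [id_eq] at h
    rw [← h]
    exact G2.2
  -- independence
  have hindep2 : IndepFun (fun ω => Real.exp (p / σ * (X ω - μ)))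
      (fun ω => Real.exp (p * β / σ * T ω)) P := hindep.comp hφ1 hφ2
  have intAB : Integrable
      (fun ω => Real.exp (p / σ * (X ω - μ)) * Real.exp (p * β / σ * T ω)) P :=
    hindep2.integrable_mul intA intB
  have valAB : ∫ ω, Real.exp (p / σ * (X ω - μ)) * Real.exp (p * β / σ * T ω) ∂P
      = (ν / (ν - p)) * (1 - p * β) ^ (-a) := by
    rw [show (fun ω => Real.exp (p / σ * (X ω - μ)) * Real.exp (p * β / σ * T ω))
      = (fun ω => Real.exp (p / σ * (X ω - μ))) * fun ω => Real.exp (p * β / σ * T ω) from rfl]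
      at intAB ⊢
    rw [hindep2.integral_mul_eq_mul_integral intA.aestronglyMeasurable intB.aestronglyMeasurable] at *
    rw [valA, valB]
  -- decomposition of the loss
  have hdecomp : (fun ω => linexLoss p ((X ω + β * T ω - μ) / σ))
      = fun ω => Real.exp (p / σ * (X ω - μ)) * Real.exp (p * β / σ * T ω)
        - (p / σ * (X ω - μ) + (p * β / σ * T ω + 1)) := by
    ext ω
    have he : p * ((X ω + β * T ω - μ) / σ) = p / σ * (X ω - μ) + p * β / σ * T ω := by
      field_simp
      ring
    rw [linexLoss, he, Real.exp_add]
    ring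
  have int2 : Integrable (fun ω => p * β / σ * T ω + 1) P := by
    exact (intT.const_mul (p * β / σ)).add (integrable_const 1)
  have intSum : Integrable
      (fun ω => p / σ * (X ω - μ) + (p * β / σ * T ω + 1)) P := by
    exact (intX'.const_mul (p / σ)).add int2
  constructor
  · rw [hdecomp]
    exact intAB.sub intSum
  · rw [hdecomp, integral_sub intAB intSum, valAB,
      integral_add (intX'.const_mul (p / σ)) int2,
      integral_add (intT.const_mul (p * β / σ)) (integrable_const 1),
      integral_const_mul, integral_const_mul, valX', valT, integral_const]
    simp only [measure_univ, probReal_univ, ENNReal.toReal_one, smul_eq_mul, one_mul, mul_one]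
    have e1 : p / σ * (σ / ν) = p / ν := by field_simp
    have e2 : p * β / σ * (a * σ) = p * β * a := by field_simp
    rw [e1, e2]
    ring



/-- In the common-unknown-scale model, for `X ~ Exp(μ, σ/nᵢ)` and
`T ~ Gamma(n−k, σ)` independent, the Linex risk of `X + β·T` is finite for `p·β < 1` and
uniquely minimized there at `β₀ᵢ = (1/p)(1 − (nᵢ/(nᵢ−p))^{1/(n−k+1)})`. -/
theorem stmt_9 {Ω : Type*} [MeasurableSpace Ω] (P : Measure Ω) [IsProbabilityMeasure P]
    (k : ℕ) (hk : 2 ≤ k) (n : Fin k → ℕ) (hn : ∀ j, 2 ≤ n j)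
    (i : Fin k) (p : ℝ) (hp : p ≠ 0) (hpi : p < n i)
    (μ σ : ℝ) (hσ : 0 < σ)
    (X T : Ω → ℝ) (hX : Measurable X) (hT : Measurable T)
    (hindep : IndepFun X T P)
    (hXlaw : Measure.map X P = expLocMeasure μ (σ / n i))
    (hTlaw : Measure.map T P = gammaScaleMeasure ((∑ j, (n j : ℝ)) - k) σ) :
    (∀ β : ℝ, p * β < 1 →
      linexRisk P p μ σ (fun ω => X ω + β * T ω) ≠ ⊤) ∧
    p * ((1 / p) * (1 - ((n i : ℝ) / ((n i : ℝ) - p)) ^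
        ((1 : ℝ) / ((∑ j, (n j : ℝ)) - k + 1)))) < 1 ∧
    (∀ β : ℝ, p * β < 1 →
      β ≠ (1 / p) * (1 - ((n i : ℝ) / ((n i : ℝ) - p)) ^
          ((1 : ℝ) / ((∑ j, (n j : ℝ)) - k + 1))) →
      linexRisk P p μ σ
          (fun ω => X ω + ((1 / p) * (1 - ((n i : ℝ) / ((n i : ℝ) - p)) ^
              ((1 : ℝ) / ((∑ j, (n j : ℝ)) - k + 1)))) * T ω) <
        linexRisk P p μ σ (fun ω => X ω + β * T ω)) := by
  have h2k : 2 * k ≤ ∑ j, n j := by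
    have h := Finset.card_nsmul_le_sum Finset.univ n 2 (fun j _ => hn j)
    simpa [Finset.card_univ, mul_comm] using h
  set m : ℕ := (∑ j, n j) - k with hmdef
  have hm1 : 1 ≤ m := by omega
  have hkN : k ≤ ∑ j, n j := by omega
  have ham : (∑ j, (n j : ℝ)) - (k : ℝ) = (m : ℝ) := by
    rw [hmdef, Nat.cast_sub hkN, Nat.cast_sum]
  have hν : (0:ℝ) < (n i : ℝ) := by
    have := hn i; positivity
  have hνp : (0:ℝ) < (n i : ℝ) - p := by linarith
  set ν : ℝ := (n i : ℝ) with hνdef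
  set c : ℝ := ν / (ν - p) with hcdef
  have hc : 0 < c := div_pos hν hνp
  rw [ham] at hTlaw ⊢
  set w : ℝ := c ^ ((1:ℝ) / ((m:ℝ) + 1)) with hwdef
  have hw : 0 < w := Real.rpow_pos_of_pos hc _
  set β₀ : ℝ := (1 / p) * (1 - w) with hβ₀def
  have hpβ₀ : p * β₀ = 1 - w := by
    rw [hβ₀def, ← mul_assoc, mul_one_div_cancel hp, one_mul]
  have hb2 : p * β₀ < 1 := by rw [hpβ₀]; linarith
  have ha : (0:ℝ) < (m:ℝ) := by exact_mod_cast hm1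
  have key : ∀ β : ℝ, p * β < 1 →
      linexRisk P p μ σ (fun ω => X ω + β * T ω)
        = ENNReal.ofReal (c * (1 - p * β) ^ (-(m:ℝ)) + (m:ℝ) * (1 - p * β)
            - (m:ℝ) - p / ν - 1)
      ∧ 0 ≤ c * (1 - p * β) ^ (-(m:ℝ)) + (m:ℝ) * (1 - p * β) - (m:ℝ) - p / ν - 1 := by
    intro β hβ
    obtain ⟨hint, hval⟩ := aux_risk_eq P β hν hpi hσ ha hβ hX hT hindep hXlaw hTlaw
    constructor
    · rw [linexRisk,
        ← ofReal_integral_eq_lintegral_ofReal hint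
          (Filter.Eventually.of_forall fun ω => aux_loss_nonneg _ _), hval]
    · rw [← hval]
      exact integral_nonneg fun ω => aux_loss_nonneg _ _
  refine ⟨fun β hβ => ?_, hb2, fun β hβ hne => ?_⟩
  · rw [(key β hβ).1]
    exact ENNReal.ofReal_ne_top
  · rw [(key β hβ).1, (key β₀ hb2).1]
    have hu : (0:ℝ) < 1 - p * β := by linarith
    have hune : (1 - p * β) ≠ w := by
      intro h
      apply hne
      have : p * β = p * β₀ := by rw [hpβ₀]; linarith
      exact mul_left_cancel₀ hp this
    have hmin := aux_min hm1 hc hu hune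
    have e0 : 1 - p * β₀ = w := by rw [hpβ₀]; ring
    have h0 := (key β₀ hb2).2
    rw [e0] at h0 ⊢
    apply (ENNReal.ofReal_lt_ofReal_iff (by linarith)).mpr
    linarith
end

section
/- Let m > 0 and p ≠ 0 with p < m, let N > 0, θ > 0, σ > 0 and μ ∈ ℝ. Let X and W be independent with X ~ Exp(μ, σ/m) and W ~ Gamma(N, θ). Then the function φ ↦ E[exp(p(X + φ·W − μ)/σ) − p(X + φ·W − μ)/σ − 1] is finite on {φ ∈ ℝ : p·φ·θ/σ < 1} and attains a strict global minimum there at φ* = (σ/(p·θ))·(1 − (m/(m−p))^{1/(N+1)}). -/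
open MeasureTheory ProbabilityTheory Real
open scoped ENNReal
open Set
open scoped NNReal

lemma aux_restrict_shift (c : ℝ) :
    (volume : Measure ℝ).restrict (Set.Ioi c) =
      Measure.map (fun x : ℝ => x + c) ((volume : Measure ℝ).restrict (Set.Ioi 0)) := by
  have h2 : (fun x : ℝ => x + c) ⁻¹' (Set.Ioi c) = Set.Ioi 0 := by
    ext x; simp
  calc (volume : Measure ℝ).restrict (Set.Ioi c)
      = (Measure.map (· + c) volume).restrict (Set.Ioi c) := by
        rw [map_add_right_eq_self]
    _ = Measure.map (· + c) (volume.restrict ((· + c) ⁻¹' (Set.Ioi c))) :=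
        Measure.restrict_map (measurable_add_const c) measurableSet_Ioi
    _ = Measure.map (fun x : ℝ => x + c) ((volume : Measure ℝ).restrict (Set.Ioi 0)) := by
        rw [h2]

lemma aux_integrableOn_shift_s16 {G : ℝ → ℝ} (c : ℝ) :
    IntegrableOn (fun x => G (x - c)) (Set.Ioi c) ↔ IntegrableOn G (Set.Ioi 0) := by
  rw [IntegrableOn, aux_restrict_shift c]
  rw [show (fun x : ℝ => x + c) = ⇑(MeasurableEquiv.addRight c) from rfl]
  rw [MeasureTheory.integrable_map_equiv]
  simp [Function.comp_def, IntegrableOn]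

lemma aux_integral_shift_s16 (G : ℝ → ℝ) (c : ℝ) :
    ∫ x in Set.Ioi c, G (x - c) = ∫ y in Set.Ioi 0, G y := by
  rw [aux_restrict_shift c]
  rw [show (fun x : ℝ => x + c) = ⇑(MeasurableEquiv.addRight c) from rfl]
  rw [MeasureTheory.integral_map_equiv]
  simp

section transfer

variable {μ s a θ : ℝ}

lemma expLoc_density_meas (μ s : ℝ) :
    Measurable fun x : ℝ =>
      (if μ < x then s⁻¹ * Real.exp (-(x - μ) / s) else 0).toNNReal := by
  apply Measurable.real_toNNReal
  exact Measurable.ite measurableSet_Ioi (by fun_prop) measurable_const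

lemma expLoc_eq (μ s : ℝ) :
    expLocMeasure μ s = volume.withDensity fun x =>
      ((if μ < x then s⁻¹ * Real.exp (-(x - μ) / s) else 0).toNNReal : ℝ≥0∞) := rfl

lemma expLoc_smul_eq (hs : 0 < s) (f : ℝ → ℝ) :
    (fun x => (if μ < x then s⁻¹ * Real.exp (-(x - μ) / s) else 0).toNNReal • f x)
      = fun x => Set.indicator (Set.Ioi μ)
          (fun x => (fun y => s⁻¹ * Real.exp (-y / s) * f (y + μ)) (x - μ)) x := by
  funext x
  rw [NNReal.smul_def]
  by_cases hx : μ < x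
  · rw [Set.indicator_of_mem (Set.mem_Ioi.mpr hx)]
    simp only [if_pos hx, sub_add_cancel]
    rw [Real.coe_toNNReal _ (by positivity), smul_eq_mul]
  · rw [Set.indicator_of_notMem (by simpa using hx)]
    simp [if_neg hx]

set_option maxHeartbeats 1000000 in
lemma expLoc_integrable_iff (hs : 0 < s) {f : ℝ → ℝ} :
    Integrable f (expLocMeasure μ s) ↔
      IntegrableOn (fun y => s⁻¹ * Real.exp (-y / s) * f (y + μ)) (Set.Ioi 0) := by
  rw [expLoc_eq]
  rw [integrable_withDensity_iff_integrable_smul (expLoc_density_meas μ s)]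
  rw [expLoc_smul_eq hs f]
  rw [integrable_indicator_iff measurableSet_Ioi]
  exact aux_integrableOn_shift_s16 (G := fun y => s⁻¹ * Real.exp (-y / s) * f (y + μ)) μ

lemma expLoc_integral_eq (hs : 0 < s) (f : ℝ → ℝ) :
    ∫ x, f x ∂(expLocMeasure μ s)
      = ∫ y in Set.Ioi 0, s⁻¹ * Real.exp (-y / s) * f (y + μ) := by
  rw [expLoc_eq, integral_withDensity_eq_integral_smul (expLoc_density_meas μ s)]
  rw [show (fun x => (if μ < x then s⁻¹ * Real.exp (-(x - μ) / s) else 0).toNNReal • f x)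
      = fun x => Set.indicator (Set.Ioi μ)
          (fun x => (fun y => s⁻¹ * Real.exp (-y / s) * f (y + μ)) (x - μ)) x from
    expLoc_smul_eq hs f]
  rw [integral_indicator measurableSet_Ioi]
  exact aux_integral_shift_s16 (fun y => s⁻¹ * Real.exp (-y / s) * f (y + μ)) μ

lemma gamma_density_meas (a θ : ℝ) :
    Measurable fun x : ℝ =>
      (if 0 < x then x ^ (a - 1) * Real.exp (-x / θ) / (Real.Gamma a * θ ^ a) else 0).toNNReal := by
  apply Measurable.real_toNNReal
  exact Measurable.ite measurableSet_Ioi (by fun_prop) measurable_const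

lemma gamma_eq (a θ : ℝ) :
    gammaScaleMeasure a θ = volume.withDensity fun x =>
      ((if 0 < x then x ^ (a - 1) * Real.exp (-x / θ) / (Real.Gamma a * θ ^ a) else 0).toNNReal
        : ℝ≥0∞) := rfl

lemma gamma_smul_eq (ha : 0 < Real.Gamma a) (hθa : 0 < θ ^ a) (f : ℝ → ℝ) :
    (fun x => (if 0 < x then x ^ (a - 1) * Real.exp (-x / θ) / (Real.Gamma a * θ ^ a)
        else 0).toNNReal • f x)
      = fun x => Set.indicator (Set.Ioi 0)
          (fun w => w ^ (a - 1) * Real.exp (-w / θ) / (Real.Gamma a * θ ^ a) * f w) x := by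
  funext x
  rw [NNReal.smul_def]
  by_cases hx : (0:ℝ) < x
  · rw [Set.indicator_of_mem (Set.mem_Ioi.mpr hx)]
    simp only [if_pos hx]
    have hnn : (0:ℝ) ≤ x ^ (a-1) * Real.exp (-x / θ) / (Real.Gamma a * θ ^ a) := by
      have h1 : (0:ℝ) ≤ x ^ (a-1) := Real.rpow_nonneg hx.le _
      positivity
    rw [Real.coe_toNNReal _ hnn, smul_eq_mul]
  · rw [Set.indicator_of_notMem (by simpa using hx)]
    simp [if_neg hx]

lemma gamma_integrable_iff (ha : 0 < Real.Gamma a) (hθa : 0 < θ ^ a) {f : ℝ → ℝ} :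
    Integrable f (gammaScaleMeasure a θ) ↔
      IntegrableOn
        (fun w => w ^ (a - 1) * Real.exp (-w / θ) / (Real.Gamma a * θ ^ a) * f w)
        (Set.Ioi 0) := by
  rw [gamma_eq, integrable_withDensity_iff_integrable_smul (gamma_density_meas a θ),
    gamma_smul_eq ha hθa f, integrable_indicator_iff measurableSet_Ioi]

lemma gamma_integral_eq (ha : 0 < Real.Gamma a) (hθa : 0 < θ ^ a) (f : ℝ → ℝ) :
    ∫ x, f x ∂(gammaScaleMeasure a θ)
      = ∫ w in Set.Ioi 0,
          w ^ (a - 1) * Real.exp (-w / θ) / (Real.Gamma a * θ ^ a) * f w := by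
  rw [gamma_eq, integral_withDensity_eq_integral_smul (gamma_density_meas a θ),
    gamma_smul_eq ha hθa f, integral_indicator measurableSet_Ioi]

end transfer

section kernels

lemma aux_kernel_integrableOn {a b : ℝ} (ha : 0 < a) (hb : 0 < b) :
    IntegrableOn (fun y : ℝ => y ^ (a - 1) * Real.exp (-(b * y))) (Set.Ioi 0) := by
  have h := integrableOn_rpow_mul_exp_neg_mul_rpow (s := a - 1) (p := 1)
    (by linarith) one_pos hb
  simpa [Real.rpow_one, neg_mul] using h

lemma aux_kernel_integral {a b : ℝ} (ha : 0 < a) (hb : 0 < b) :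
    ∫ y in Set.Ioi 0, y ^ (a - 1) * Real.exp (-(b * y)) = (1 / b) ^ a * Real.Gamma a :=
  Real.integral_rpow_mul_exp_neg_mul_Ioi ha hb

end kernels

section special

variable {μ s a θ c : ℝ}

lemma expLoc_exp (hs : 0 < s) (hc : c < 1 / s) :
    Integrable (fun x => Real.exp (c * (x - μ))) (expLocMeasure μ s) ∧
    ∫ x, Real.exp (c * (x - μ)) ∂(expLocMeasure μ s) = (1 - c * s)⁻¹ := by
  have hb : 0 < 1 / s - c := by linarith
  have hfun : ∀ y ∈ Set.Ioi (0:ℝ),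
      s⁻¹ * Real.exp (-y / s) * Real.exp (c * (y + μ - μ))
        = s⁻¹ * (y ^ ((1:ℝ) - 1) * Real.exp (-((1 / s - c) * y))) := by
    intro y _
    rw [show (1:ℝ) - 1 = 0 by norm_num, Real.rpow_zero, one_mul,
      show -((1 / s - c) * y) = -y / s + c * (y + μ - μ) by field_simp; ring,
      Real.exp_add]
    ring
  have hkey : 0 < 1 - c * s := by
    have h := mul_pos hb hs
    have h2 : (1 / s - c) * s = 1 - c * s := by field_simp
    linarith [h2 ▸ h]
  constructor
  · rw [expLoc_integrable_iff hs]
    have h0 : IntegrableOn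
        (fun y : ℝ => s⁻¹ * (y ^ ((1:ℝ) - 1) * Real.exp (-((1 / s - c) * y))))
        (Set.Ioi 0) := (aux_kernel_integrableOn one_pos hb).const_mul _
    exact h0.congr_fun (fun y hy => (hfun y hy).symm) measurableSet_Ioi
  · rw [expLoc_integral_eq hs, setIntegral_congr_fun measurableSet_Ioi hfun,
      integral_const_mul, aux_kernel_integral one_pos hb, Real.Gamma_one,
      Real.rpow_one]
    have h3 : (1:ℝ) / (1 / s - c) = s / (1 - c * s) := by
      rw [div_eq_div_iff (ne_of_gt hb) (ne_of_gt hkey)]; field_simp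
    rw [h3, mul_one, div_eq_mul_inv, ← mul_assoc, inv_mul_cancel₀ (ne_of_gt hs), one_mul]

lemma expLoc_id (hs : 0 < s) :
    Integrable (fun x => x) (expLocMeasure μ s) ∧
    ∫ x, x ∂(expLocMeasure μ s) = μ + s := by
  have hb : 0 < s⁻¹ := inv_pos.mpr hs
  have hfun : ∀ y ∈ Set.Ioi (0:ℝ),
      s⁻¹ * Real.exp (-y / s) * (y + μ)
        = s⁻¹ * (y ^ ((2:ℝ) - 1) * Real.exp (-(s⁻¹ * y)))
          + s⁻¹ * μ * (y ^ ((1:ℝ) - 1) * Real.exp (-(s⁻¹ * y))) := by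
    intro y _
    rw [show (2:ℝ) - 1 = 1 by norm_num, show (1:ℝ) - 1 = 0 by norm_num,
      Real.rpow_one, Real.rpow_zero, show -(s⁻¹ * y) = -y / s by ring]
    ring
  have hI1 : IntegrableOn
      (fun y : ℝ => s⁻¹ * (y ^ ((2:ℝ) - 1) * Real.exp (-(s⁻¹ * y)))) (Set.Ioi 0) :=
    (aux_kernel_integrableOn two_pos hb).const_mul _
  have hI2 : IntegrableOn
      (fun y : ℝ => s⁻¹ * μ * (y ^ ((1:ℝ) - 1) * Real.exp (-(s⁻¹ * y)))) (Set.Ioi 0) :=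
    (aux_kernel_integrableOn one_pos hb).const_mul _
  constructor
  · rw [expLoc_integrable_iff hs]
    have hI12 : IntegrableOn
        (fun y : ℝ => s⁻¹ * (y ^ ((2:ℝ) - 1) * Real.exp (-(s⁻¹ * y)))
          + s⁻¹ * μ * (y ^ ((1:ℝ) - 1) * Real.exp (-(s⁻¹ * y)))) (Set.Ioi 0) := hI1.add hI2
    exact hI12.congr_fun (fun y hy => (hfun y hy).symm) measurableSet_Ioi
  · rw [expLoc_integral_eq hs, setIntegral_congr_fun measurableSet_Ioi hfun,
      integral_add hI1 hI2, integral_const_mul, integral_const_mul,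
      aux_kernel_integral two_pos hb, aux_kernel_integral one_pos hb,
      Real.Gamma_two, Real.Gamma_one, one_div, inv_inv,
      show (2:ℝ) = ((2:ℕ):ℝ) by norm_num, Real.rpow_natCast, Real.rpow_one]
    field_simp
    ring

lemma gamma_exp (ha : 0 < a) (hθ : 0 < θ) (hc : c * θ < 1) :
    Integrable (fun w => Real.exp (c * w)) (gammaScaleMeasure a θ) ∧
    ∫ w, Real.exp (c * w) ∂(gammaScaleMeasure a θ) = (1 - c * θ) ^ (-a) := by
  have hΓ : 0 < Real.Gamma a := Real.Gamma_pos_of_pos ha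
  have hθa : 0 < θ ^ a := Real.rpow_pos_of_pos hθ a
  have hb : 0 < θ⁻¹ - c := by
    have h1 : c < 1 / θ := (lt_div_iff₀ hθ).mpr hc
    rw [one_div] at h1; linarith
  have key : (θ⁻¹ - c) * θ = 1 - c * θ := by field_simp
  have h1 : 0 < 1 - c * θ := key ▸ mul_pos hb hθ
  have hfun : ∀ w ∈ Set.Ioi (0:ℝ),
      w ^ (a - 1) * Real.exp (-w / θ) / (Real.Gamma a * θ ^ a) * Real.exp (c * w)
        = (Real.Gamma a * θ ^ a)⁻¹ * (w ^ (a - 1) * Real.exp (-((θ⁻¹ - c) * w))) := by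
    intro w _
    rw [show -((θ⁻¹ - c) * w) = -w / θ + c * w by field_simp; ring, Real.exp_add]
    ring
  constructor
  · rw [gamma_integrable_iff hΓ hθa]
    have h0 : IntegrableOn
        (fun w : ℝ => (Real.Gamma a * θ ^ a)⁻¹ * (w ^ (a - 1) * Real.exp (-((θ⁻¹ - c) * w))))
        (Set.Ioi 0) := (aux_kernel_integrableOn ha hb).const_mul _
    exact h0.congr_fun (fun w hw => (hfun w hw).symm) measurableSet_Ioi
  · rw [gamma_integral_eq hΓ hθa, setIntegral_congr_fun measurableSet_Ioi hfun,
      integral_const_mul, aux_kernel_integral ha hb]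
    have h2 : (1:ℝ) / (θ⁻¹ - c) = θ * (1 - c * θ)⁻¹ := by
      rw [← div_eq_mul_inv, div_eq_div_iff (ne_of_gt hb) (ne_of_gt h1)]; field_simp
    rw [h2, Real.mul_rpow hθ.le (inv_nonneg.mpr h1.le), Real.inv_rpow h1.le,
      ← Real.rpow_neg h1.le]
    field_simp

lemma gamma_id (ha : 0 < a) (hθ : 0 < θ) :
    Integrable (fun w => w) (gammaScaleMeasure a θ) ∧
    ∫ w, w ∂(gammaScaleMeasure a θ) = a * θ := by
  have hΓ : 0 < Real.Gamma a := Real.Gamma_pos_of_pos ha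
  have hθa : 0 < θ ^ a := Real.rpow_pos_of_pos hθ a
  have hb : 0 < θ⁻¹ := inv_pos.mpr hθ
  have hfun : ∀ w ∈ Set.Ioi (0:ℝ),
      w ^ (a - 1) * Real.exp (-w / θ) / (Real.Gamma a * θ ^ a) * w
        = (Real.Gamma a * θ ^ a)⁻¹ * (w ^ (a + 1 - 1) * Real.exp (-(θ⁻¹ * w))) := by
    intro w hw
    rw [show a + 1 - 1 = (a - 1) + 1 by ring, Real.rpow_add_one (ne_of_gt hw),
      show -(θ⁻¹ * w) = -w / θ by ring]
    ring
  constructor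
  · rw [gamma_integrable_iff hΓ hθa]
    have h0 : IntegrableOn
        (fun w : ℝ => (Real.Gamma a * θ ^ a)⁻¹ * (w ^ (a + 1 - 1) * Real.exp (-(θ⁻¹ * w))))
        (Set.Ioi 0) := (aux_kernel_integrableOn (by linarith) hb).const_mul _
    exact h0.congr_fun (fun w hw => (hfun w hw).symm) measurableSet_Ioi
  · rw [gamma_integral_eq hΓ hθa, setIntegral_congr_fun measurableSet_Ioi hfun,
      integral_const_mul, aux_kernel_integral (by linarith : (0:ℝ) < a + 1) hb,
      one_div, inv_inv, Real.Gamma_add_one (ne_of_gt ha),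
      Real.rpow_add_one (ne_of_gt hθ)]
    field_simp

end special

lemma aux_strict_min {A Nr : ℝ} (hA : 0 < A) (hN : 0 < Nr) {u : ℝ} (hu : 0 < u)
    (hne : u ≠ A ^ ((1:ℝ) / (Nr + 1))) :
    A * (A ^ ((1:ℝ) / (Nr + 1))) ^ (-Nr) + Nr * A ^ ((1:ℝ) / (Nr + 1))
      < A * u ^ (-Nr) + Nr * u := by
  set us := A ^ ((1:ℝ) / (Nr + 1)) with hus
  have hus0 : 0 < us := Real.rpow_pos_of_pos hA _
  set f : ℝ → ℝ := fun x => A * x ^ (-Nr) + Nr * x with hf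
  have hderiv : ∀ x : ℝ, x ≠ 0 → HasDerivAt f (A * (-Nr * x ^ (-Nr - 1)) + Nr) x := by
    intro x hx
    have h1 : HasDerivAt (fun y : ℝ => y ^ (-Nr)) (-Nr * x ^ (-Nr - 1)) x :=
      Real.hasDerivAt_rpow_const (Or.inl hx)
    have h2 : HasDerivAt (fun y : ℝ => Nr * y) Nr x := by
      simpa using (hasDerivAt_id x).const_mul Nr
    exact (h1.const_mul A).add h2
  have hcrit : A * us ^ (-Nr - 1) = 1 := by
    rw [hus, ← Real.rpow_mul hA.le]
    have h0 : (1:ℝ) / (Nr + 1) * (-Nr - 1) = -1 := by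
      field_simp; ring
    rw [h0, Real.rpow_neg_one, mul_inv_cancel₀ (ne_of_gt hA)]
  have hmono : ∀ {x y : ℝ}, 0 < x → x < y → y ^ (-Nr - 1) < x ^ (-Nr - 1) := by
    intro x y hx hxy
    rw [show -Nr - 1 = -(Nr + 1) by ring, Real.rpow_neg hx.le,
      Real.rpow_neg (by linarith : (0:ℝ) ≤ y)]
    have hlt : x ^ (Nr + 1) < y ^ (Nr + 1) := Real.rpow_lt_rpow hx.le hxy (by linarith)
    exact inv_strictAnti₀ (Real.rpow_pos_of_pos hx _) hlt
  have hcont : ∀ x : ℝ, x ≠ 0 → ContinuousAt f x := by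
    intro x hx
    exact (continuousAt_const.mul (Real.continuousAt_rpow_const x (-Nr) (Or.inl hx))).add
      (continuousAt_const.mul continuousAt_id)
  rcases lt_or_gt_of_ne hne with hlt | hgt
  · have anti : StrictAntiOn f (Set.Ioc 0 us) := by
      apply strictAntiOn_of_deriv_neg (convex_Ioc 0 us)
      · intro x hx; exact (hcont x (ne_of_gt hx.1)).continuousWithinAt
      · intro x hx
        rw [interior_Ioc] at hx
        rw [(hderiv x (ne_of_gt hx.1)).deriv]
        have h1 : us ^ (-Nr - 1) < x ^ (-Nr - 1) := hmono hx.1 hx.2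
        have h2 : 1 < A * x ^ (-Nr - 1) := by
          nlinarith [mul_lt_mul_of_pos_left h1 hA]
        nlinarith
    exact anti ⟨hu, hlt.le⟩ ⟨hus0, le_rfl⟩ hlt
  · have mono : StrictMonoOn f (Set.Ici us) := by
      apply strictMonoOn_of_deriv_pos (convex_Ici us)
      · intro x hx; exact (hcont x (ne_of_gt (lt_of_lt_of_le hus0 hx))).continuousWithinAt
      · intro x hx
        rw [interior_Ici] at hx
        rw [(hderiv x (ne_of_gt (lt_trans hus0 hx))).deriv]
        have h1 : x ^ (-Nr - 1) < us ^ (-Nr - 1) := hmono hus0 hx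
        have h2 : A * x ^ (-Nr - 1) < 1 := by
          nlinarith [mul_lt_mul_of_pos_left h1 hA]
        nlinarith
    exact mono Set.self_mem_Ici (Set.mem_Ici.mpr hgt.le) hgt

lemma risk_repr {Ω : Type*} [MeasurableSpace Ω] (P : Measure Ω) [IsProbabilityMeasure P]
    (m p N θ σ μ : ℝ) (hm : 0 < m) (hp : p ≠ 0) (hpm : p < m)
    (hN : 0 < N) (hθ : 0 < θ) (hσ : 0 < σ)
    (X W : Ω → ℝ) (hX : Measurable X) (hW : Measurable W)
    (hindep : IndepFun X W P)
    (hXlaw : Measure.map X P = expLocMeasure μ (σ / m))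
    (hWlaw : Measure.map W P = gammaScaleMeasure N θ)
    (φ : ℝ) (hφ : p * φ * θ / σ < 1) :
    linexRisk P p μ σ (fun ω => X ω + φ * W ω)
      = ENNReal.ofReal
          (m / (m - p) * (1 - p * θ / σ * φ) ^ (-N) - p / m - N * (p * θ / σ) * φ - 1)
    ∧ 0 ≤ m / (m - p) * (1 - p * θ / σ * φ) ^ (-N) - p / m - N * (p * θ / σ) * φ - 1 := by
  have hs : 0 < σ / m := div_pos hσ hm
  -- marginal moment facts
  have hc1 : p / σ < 1 / (σ / m) := by
    rw [one_div_div]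
    gcongr
  have hE := expLoc_exp (μ := μ) hs hc1
  have hEid := expLoc_id (μ := μ) hs
  have hc2 : p * φ / σ * θ < 1 := by
    rw [show p * φ / σ * θ = p * φ * θ / σ by ring]; exact hφ
  have hG := gamma_exp hN hθ hc2
  have hGid := gamma_id hN hθ
  -- transfer to P
  have hEtrans : ∀ {f : ℝ → ℝ}, Measurable f →
      Integrable f (expLocMeasure μ (σ / m)) → Integrable (fun ω => f (X ω)) P := by
    intro f hf hint
    rw [← hXlaw] at hint
    exact (integrable_map_measure hf.aestronglyMeasurable hX.aemeasurable).mp hint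
  have hGtrans : ∀ {f : ℝ → ℝ}, Measurable f →
      Integrable f (gammaScaleMeasure N θ) → Integrable (fun ω => f (W ω)) P := by
    intro f hf hint
    rw [← hWlaw] at hint
    exact (integrable_map_measure hf.aestronglyMeasurable hW.aemeasurable).mp hint
  have hEint : ∀ {f : ℝ → ℝ}, Measurable f →
      ∫ ω, f (X ω) ∂P = ∫ x, f x ∂(expLocMeasure μ (σ / m)) := by
    intro f hf
    rw [← hXlaw, integral_map hX.aemeasurable hf.aestronglyMeasurable]
  have hGint : ∀ {f : ℝ → ℝ}, Measurable f →
      ∫ ω, f (W ω) ∂P = ∫ w, f w ∂(gammaScaleMeasure N θ) := by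
    intro f hf
    rw [← hWlaw, integral_map hW.aemeasurable hf.aestronglyMeasurable]
  have hmeas1 : Measurable fun x : ℝ => Real.exp (p / σ * (x - μ)) := by fun_prop
  have hmeas2 : Measurable fun w : ℝ => Real.exp (p * φ / σ * w) := by fun_prop
  -- integrability of pieces
  have hIE1 : Integrable (fun ω => Real.exp (p / σ * (X ω - μ))) P := hEtrans hmeas1 hE.1
  have hIE2 : Integrable (fun ω => Real.exp (p * φ / σ * (W ω))) P := hGtrans hmeas2 hG.1
  have hIX : Integrable X P := hEtrans measurable_id hEid.1
  have hIW : Integrable W P := hGtrans measurable_id hGid.1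
  have hiE : IndepFun (fun ω => Real.exp (p / σ * (X ω - μ)))
      (fun ω => Real.exp (p * φ / σ * (W ω))) P := hindep.comp hmeas1 hmeas2
  have hImul : Integrable
      (fun ω => Real.exp (p / σ * (X ω - μ)) * Real.exp (p * φ / σ * (W ω))) P :=
    hiE.integrable_mul hIE1 hIE2
  -- value of the product integral
  have hval1 : ∫ ω, Real.exp (p / σ * (X ω - μ)) ∂P = m / (m - p) := by
    rw [hEint hmeas1, hE.2]
    rw [show 1 - p / σ * (σ / m) = (m - p) / m by field_simp, inv_div]
  have hval2 : ∫ ω, Real.exp (p * φ / σ * (W ω)) ∂P = (1 - p * θ / σ * φ) ^ (-N) := by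
    rw [hGint hmeas2, hG.2, show 1 - p * φ / σ * θ = 1 - p * θ / σ * φ by ring]
  have hvalmul : ∫ ω, Real.exp (p / σ * (X ω - μ)) * Real.exp (p * φ / σ * (W ω)) ∂P
      = m / (m - p) * (1 - p * θ / σ * φ) ^ (-N) := by
    have h := hiE.integral_mul_eq_mul_integral hIE1.aestronglyMeasurable hIE2.aestronglyMeasurable
    rw [← hval1, ← hval2]
    exact h
  have hvalX : ∫ ω, X ω ∂P = μ + σ / m := by
    have h := hEint (f := fun x => x) measurable_id
    rw [h, hEid.2]
  have hvalW : ∫ ω, W ω ∂P = N * θ := by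
    have h := hGint (f := fun w => w) measurable_id
    rw [h, hGid.2]
  -- loss decomposition
  have hloss_eq : (fun ω => linexLoss p ((X ω + φ * W ω - μ) / σ))
      = fun ω => Real.exp (p / σ * (X ω - μ)) * Real.exp (p * φ / σ * (W ω))
          - (p / σ * X ω + p * φ / σ * W ω + (1 - p * μ / σ)) := by
    funext ω
    have harg : p * ((X ω + φ * W ω - μ) / σ)
        = p / σ * (X ω - μ) + p * φ / σ * (W ω) := by
      field_simp; ring
    simp only [linexLoss, harg, Real.exp_add]
    ring
  have hnn : ∀ ω, 0 ≤ linexLoss p ((X ω + φ * W ω - μ) / σ) := by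
    intro ω
    have h := Real.add_one_le_exp (p * ((X ω + φ * W ω - μ) / σ))
    simp only [linexLoss]
    linarith
  have hIlin2 : Integrable (fun ω => p / σ * X ω + p * φ / σ * W ω) P :=
    (hIX.const_mul _).add (hIW.const_mul _)
  have hIlin : Integrable
      (fun ω => p / σ * X ω + p * φ / σ * W ω + (1 - p * μ / σ)) P :=
    hIlin2.add (integrable_const _)
  have hInt : Integrable (fun ω => linexLoss p ((X ω + φ * W ω - μ) / σ)) P := by
    rw [hloss_eq]
    exact hImul.sub hIlin
  have hIntVal : ∫ ω, linexLoss p ((X ω + φ * W ω - μ) / σ) ∂P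
      = m / (m - p) * (1 - p * θ / σ * φ) ^ (-N) - p / m - N * (p * θ / σ) * φ - 1 := by
    rw [hloss_eq]
    rw [integral_sub hImul hIlin]
    rw [integral_add hIlin2 (integrable_const _)]
    rw [integral_add (hIX.const_mul _) (hIW.const_mul _)]
    rw [integral_const_mul, integral_const_mul, integral_const, hvalmul, hvalX, hvalW]
    simp only [measure_univ, probReal_univ, ENNReal.toReal_one, smul_eq_mul, one_mul]
    field_simp
    ring
  constructor
  · simp only [linexRisk]
    rw [← MeasureTheory.ofReal_integral_eq_lintegral_ofReal hInt
      (Filter.Eventually.of_forall hnn), hIntVal]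
  · rw [← hIntVal]
    exact integral_nonneg hnn

/-- For independent `X ~ Exp(μ, σ/m)` and `W ~ Gamma(N, θ)`, with `p < m`,
the Linex risk of `X + φ·W` is finite on `{φ : p·φ·θ/σ < 1}` and uniquely minimized there at
`φ* = (σ/(pθ))·(1 − (m/(m−p))^{1/(N+1)})`. -/
theorem stmt_16 {Ω : Type*} [MeasurableSpace Ω] (P : Measure Ω) [IsProbabilityMeasure P]
    (m p N θ σ μ : ℝ) (hm : 0 < m) (hp : p ≠ 0) (hpm : p < m)
    (hN : 0 < N) (hθ : 0 < θ) (hσ : 0 < σ)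
    (X W : Ω → ℝ) (hX : Measurable X) (hW : Measurable W)
    (hindep : IndepFun X W P)
    (hXlaw : Measure.map X P = expLocMeasure μ (σ / m))
    (hWlaw : Measure.map W P = gammaScaleMeasure N θ) :
    (∀ φ : ℝ, p * φ * θ / σ < 1 →
      linexRisk P p μ σ (fun ω => X ω + φ * W ω) ≠ ⊤) ∧
    p * ((σ / (p * θ)) * (1 - (m / (m - p)) ^ ((1 : ℝ) / (N + 1)))) * θ / σ < 1 ∧
    (∀ φ : ℝ, p * φ * θ / σ < 1 →
      φ ≠ (σ / (p * θ)) * (1 - (m / (m - p)) ^ ((1 : ℝ) / (N + 1))) →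
      linexRisk P p μ σ
          (fun ω => X ω + ((σ / (p * θ)) * (1 - (m / (m - p)) ^ ((1 : ℝ) / (N + 1)))) * W ω) <
        linexRisk P p μ σ (fun ω => X ω + φ * W ω)) := by
  have hA : 0 < m / (m - p) := div_pos hm (by linarith)
  have hAp : 0 < (m / (m - p)) ^ ((1:ℝ) / (N + 1)) := Real.rpow_pos_of_pos hA _
  set φs : ℝ := σ / (p * θ) * (1 - (m / (m - p)) ^ ((1:ℝ) / (N + 1))) with hφs
  have hcφs : p * φs * θ / σ = 1 - (m / (m - p)) ^ ((1:ℝ) / (N + 1)) := by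
    rw [hφs]
    field_simp
  have h2 : p * φs * θ / σ < 1 := by rw [hcφs]; linarith
  refine ⟨fun φ hφ => ?_, h2, fun φ hφ hneq => ?_⟩
  · rw [(risk_repr P m p N θ σ μ hm hp hpm hN hθ hσ X W hX hW hindep hXlaw hWlaw φ hφ).1]
    exact ENNReal.ofReal_ne_top
  · have k1 := risk_repr P m p N θ σ μ hm hp hpm hN hθ hσ X W hX hW hindep hXlaw hWlaw φs h2
    have k2 := risk_repr P m p N θ σ μ hm hp hpm hN hθ hσ X W hX hW hindep hXlaw hWlaw φ hφ
    rw [k1.1, k2.1, ENNReal.ofReal_lt_ofReal_iff_of_nonneg k1.2]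
    -- now a real inequality
    have hc0 : p * θ / σ ≠ 0 :=
      div_ne_zero (mul_ne_zero hp (ne_of_gt hθ)) (ne_of_gt hσ)
    have hu : 0 < 1 - p * θ / σ * φ := by
      have h' : p * θ / σ * φ = p * φ * θ / σ := by ring
      rw [h']; linarith
    have hus : 1 - p * θ / σ * φs = (m / (m - p)) ^ ((1:ℝ) / (N + 1)) := by
      have h' : p * θ / σ * φs = p * φs * θ / σ := by ring
      rw [h', hcφs]; ring
    have hneu : 1 - p * θ / σ * φ ≠ (m / (m - p)) ^ ((1:ℝ) / (N + 1)) := by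
      intro hcontra
      apply hneq
      have h3 : p * θ / σ * φ = p * θ / σ * φs := by
        rw [← hus] at hcontra; linarith
      exact mul_left_cancel₀ hc0 h3
    have hmain := aux_strict_min hA hN hu hneu
    have hcs : p * θ / σ * φs = 1 - (m / (m - p)) ^ ((1:ℝ) / (N + 1)) := by
      linarith [hus]
    have t1 : N * (p * θ / σ) * φs = N - N * ((m / (m - p)) ^ ((1:ℝ) / (N + 1))) := by
      have h' : N * (p * θ / σ) * φs = N * (p * θ / σ * φs) := by ring
      rw [h', hcs]; ring
    have t2 : N * (p * θ / σ) * φ = N - N * (1 - p * θ / σ * φ) := by ring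
    rw [hus, t1, t2]
    linarith [hmain]
end
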